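/- arXiv:1405.4037 — 2 statements merged into one kernel-verified Lean document; each statement's English description precedes it below -/
import Mathlib

section
/- Let k be a field of characteristic 0 and G a finite group. Suppose F₁/k and F₂/k are field extensions and ρ₁ : G → GL_n(F₁), ρ₂ : G → GL_n(F₂) are representations of G with the same character χ : G → k (that is, trace(ρ₁(g)) = trace(ρ₂(g)) = χ(g) ∈ k for all g ∈ G). Then the k-algebras Env_k(ρ₁) and Env_k(ρ₂) are isomorphic. -/
open Matrix

/-- The character of a matrix representation. -/
noncomputable def repChar {G F : Type*} [Group G] [Field F] {n : ℕ}
    (ρ : G →* GL (Fin n) F) (g : G) : F :=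
  Matrix.trace (ρ g : Matrix (Fin n) (Fin n) F)

/-- The `k`-envelope of a matrix representation `ρ : G → GL_n(F)`: the `k`-subalgebra of
`M_n(F)` spanned by `ρ(G)`. -/
noncomputable def envelope (k : Type*) {F G : Type*} [Field k] [Field F] [Algebra k F]
    [Group G] {n : ℕ} (ρ : G →* GL (Fin n) F) : Subalgebra k (Matrix (Fin n) (Fin n) F) :=
  Algebra.adjoin k (Set.range fun g => (ρ g : Matrix (Fin n) (Fin n) F))

namespace EnvAux

noncomputable section

open MonoidAlgebra Module LinearMap

universe u₁ u₂ v w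

section Maschke

variable {k : Type u₁} [CommRing k] {G : Type u₂} [Group G]
variable {V : Type v} [AddCommGroup V] [Module k V] [Module (MonoidAlgebra k G) V]
variable [IsScalarTower k (MonoidAlgebra k G) V]
variable {W : Type w} [AddCommGroup W] [Module k W] [Module (MonoidAlgebra k G) W]
variable [IsScalarTower k (MonoidAlgebra k G) W]
variable (π : W →ₗ[k] V)

/-- conjugate of `π` by `g`. -/
def conjugate (g : G) : W →ₗ[k] V :=
  GroupSMul.linearMap k V g⁻¹ ∘ₗ π ∘ₗ GroupSMul.linearMap k W g

theorem conjugate_apply (g : G) (v : W) :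
    conjugate π g v = MonoidAlgebra.single g⁻¹ (1 : k) • π (MonoidAlgebra.single g (1 : k) • v) :=
  rfl

variable (i : V →ₗ[MonoidAlgebra k G] W)

theorem conjugate_i (h : ∀ v : V, π (i v) = v) (g : G) (v : V) :
    (conjugate π g : W → V) (i v) = v := by
  rw [conjugate_apply, ← i.map_smul, h, ← mul_smul, MonoidAlgebra.single_mul_single, mul_one, inv_mul_cancel,
    ← one_def, one_smul]

variable (G) [Fintype G]

/-- sum of conjugates -/
def sumOfConjugates : W →ₗ[k] V :=
  ∑ g : G, conjugate π g

lemma sumOfConjugates_apply (v : W) : sumOfConjugates G π v = ∑ g : G, conjugate π g v :=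
  LinearMap.sum_apply _ _ _

/-- the sum is equivariant -/
def sumOfConjugatesEquivariant : W →ₗ[MonoidAlgebra k G] V :=
  MonoidAlgebra.equivariantOfLinearOfComm (sumOfConjugates G π) fun g v => by
    simp only [sumOfConjugates_apply, Finset.smul_sum, conjugate_apply]
    refine Fintype.sum_bijective (· * g) (Group.mulRight_bijective g) _ _ fun i ↦ ?_
    simp only [smul_smul, MonoidAlgebra.single_mul_single, _root_.mul_inv_rev, mul_inv_cancel_left, one_mul]

theorem sumOfConjugatesEquivariant_apply (v : W) :
    sumOfConjugatesEquivariant G π v = ∑ g : G, conjugate π g v :=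
  sumOfConjugates_apply G π v

/-- the equivariant projection -/
def equivariantProjection : W →ₗ[MonoidAlgebra k G] V :=
  Ring.inverse (Fintype.card G : k) • sumOfConjugatesEquivariant G π

theorem equivariantProjection_apply (v : W) :
    equivariantProjection G π v
      = Ring.inverse (Fintype.card G : k) • ∑ g : G, conjugate π g v := by
  simp only [equivariantProjection, LinearMap.smul_apply, sumOfConjugatesEquivariant_apply]

theorem equivariantProjection_condition (hcard : IsUnit (Fintype.card G : k))
    (h : ∀ v : V, π (i v) = v) (v : V) : (equivariantProjection G π) (i v) = v := by
  rw [equivariantProjection_apply]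
  simp only [conjugate_i π i h]
  rw [Finset.sum_const, Finset.card_univ, ← Nat.cast_smul_eq_nsmul k, smul_smul,
    Ring.inverse_mul_cancel _ hcard, one_smul]

end Maschke

section SS

variable {k : Type u₁} [Field k] {G : Type u₂} [Fintype G] [Group G]
  [NeZero (Fintype.card G : k)]
variable {V : Type v} [AddCommGroup V] [Module (MonoidAlgebra k G) V]
variable {W : Type w} [AddCommGroup W] [Module (MonoidAlgebra k G) W]

theorem exists_leftInverse_of_injective
    (f : V →ₗ[MonoidAlgebra k G] W) (hf : LinearMap.ker f = ⊥) :
    ∃ g : W →ₗ[MonoidAlgebra k G] V, g.comp f = LinearMap.id := by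
  let A := MonoidAlgebra k G
  letI : Module k W := .compHom W (algebraMap k A)
  letI : Module k V := .compHom V (algebraMap k A)
  have : IsScalarTower k (MonoidAlgebra k G) W := IsScalarTower.of_compHom k A W
  have : IsScalarTower k (MonoidAlgebra k G) V := IsScalarTower.of_compHom k A V
  obtain ⟨φ, hφ⟩ := (f.restrictScalars k).exists_leftInverse_of_injective <| by
    simp only [hf, Submodule.restrictScalars_bot, LinearMap.ker_restrictScalars]
  refine ⟨equivariantProjection G φ, DFunLike.ext _ _ ?_⟩
  exact equivariantProjection_condition G φ _ (.mk0 _ <| NeZero.ne _) <| DFunLike.congr_fun hφ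

theorem submodule_exists_isCompl (p : Submodule (MonoidAlgebra k G) V) :
    ∃ q : Submodule (MonoidAlgebra k G) V, IsCompl p q := by
  rcases exists_leftInverse_of_injective p.subtype p.ker_subtype with ⟨f, hf⟩
  exact ⟨LinearMap.ker f, LinearMap.isCompl_of_proj <| DFunLike.congr_fun hf⟩

instance complementedLattice' : ComplementedLattice (Submodule (MonoidAlgebra k G) V) :=
  ⟨submodule_exists_isCompl⟩

theorem isSemisimpleRing : IsSemisimpleRing (MonoidAlgebra k G) := by
  unfold IsSemisimpleRing
  exact { }

end SS

end

end EnvAux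

/-- An idempotent matrix with zero trace over a char-zero field is zero. -/
lemma idem_trace_zero {F : Type*} [Field F] [CharZero F] {n : ℕ}
    {P : Matrix (Fin n) (Fin n) F} (hP : P * P = P) (hT : Matrix.trace P = 0) : P = 0 := by
  set f := Matrix.toLin' P with hfdef
  have hf : f ∘ₗ f = f := by rw [hfdef, ← Matrix.toLin'_mul, hP]
  obtain ⟨p, hp⟩ := (LinearMap.isProj_iff_isIdempotentElem f).mpr hf
  have htr : LinearMap.trace F (Fin n → F) f = Matrix.trace P := by
    rw [LinearMap.trace_eq_matrix_trace F (Pi.basisFun F (Fin n)) f,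
      LinearMap.toMatrix_eq_toMatrix', hfdef, LinearMap.toMatrix'_toLin']
  have h2 := hp.trace
  rw [htr, hT] at h2
  have h3 : Module.finrank F p = 0 := by exact_mod_cast h2.symm
  have h4 : p = ⊥ := Submodule.finrank_eq_zero.mp h3
  have h5 : f = 0 := by
    apply LinearMap.ext; intro v
    have := hp.map_mem v
    rw [h4, Submodule.mem_bot] at this
    simpa using this
  have := LinearMap.toMatrix'_toLin' P
  rw [← hfdef, h5, map_zero] at this
  exact this.symm

section Main

variable {k : Type*} [Field k] [CharZero k] {F : Type*} [Field F] [Algebra k F]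
  {G : Type*} [Group G] [Fintype G] {n : ℕ}

/-- The lift of `ρ` to the monoid algebra. -/
noncomputable def liftRep (k : Type*) [Field k] [Algebra k F] (ρ : G →* GL (Fin n) F) :
    MonoidAlgebra k G →ₐ[k] Matrix (Fin n) (Fin n) F :=
  MonoidAlgebra.lift k _ G ((Units.coeHom (Matrix (Fin n) (Fin n) F)).comp ρ)

lemma liftRep_of (ρ : G →* GL (Fin n) F) (g : G) :
    liftRep k ρ (MonoidAlgebra.of k G g) = (ρ g : Matrix (Fin n) (Fin n) F) := by
  simp [liftRep]

lemma envelope_eq_range (ρ : G →* GL (Fin n) F) : envelope k ρ = (liftRep k ρ).range := by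
  apply le_antisymm
  · apply Algebra.adjoin_le
    rintro _ ⟨g, rfl⟩
    exact ⟨MonoidAlgebra.of k G g, liftRep_of ρ g⟩
  · rintro a ⟨x, rfl⟩
    show liftRep k ρ x ∈ envelope k ρ
    induction x using MonoidAlgebra.induction_on with
    | of g => exact Algebra.subset_adjoin ⟨g, (liftRep_of ρ g).symm⟩
    | add x y hx hy => rw [map_add]; exact add_mem hx hy
    | smul c x hx => rw [_root_.map_smul]; exact Subalgebra.smul_mem _ hx c

/-- Linear extension of the character to the monoid algebra. -/
noncomputable def charFun (k : Type*) [Field k] (χ : G → k) (x : MonoidAlgebra k G) : k :=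
  x.coeff.sum fun g c => c * χ g

lemma trace_liftRep (ρ : G →* GL (Fin n) F) (χ : G → k)
    (h : ∀ g, repChar ρ g = algebraMap k F (χ g)) (x : MonoidAlgebra k G) :
    Matrix.trace (liftRep k ρ x) = algebraMap k F (charFun k χ x) := by
  rw [liftRep, MonoidAlgebra.lift_apply, charFun]
  rw [Finsupp.sum, Finsupp.sum, Matrix.trace_sum, map_sum]
  refine Finset.sum_congr rfl fun g _ => ?_
  rw [Matrix.trace_smul]
  have := h g
  rw [repChar] at this
  simp only [MonoidHom.coe_comp, Function.comp_apply, Units.coeHom_apply]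
  rw [this, Algebra.smul_def, ← _root_.map_mul]

lemma liftRep_eq_zero_iff (ρ : G →* GL (Fin n) F) (χ : G → k)
    (h : ∀ g, repChar ρ g = algebraMap k F (χ g)) (x : MonoidAlgebra k G) :
    liftRep k ρ x = 0 ↔ ∀ y, charFun k χ (x * y) = 0 := by
  have hinj : Function.Injective (algebraMap k F) := (algebraMap k F).injective
  constructor
  · intro hx y
    apply hinj
    rw [map_zero, ← trace_liftRep ρ χ h, _root_.map_mul, hx, zero_mul, Matrix.trace_zero]
  · intro hx
    haveI : NeZero ((Fintype.card G : k)) := ⟨Nat.cast_ne_zero.mpr Fintype.card_ne_zero⟩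
    haveI : IsSemisimpleRing (MonoidAlgebra k G) := EnvAux.isSemisimpleRing
    haveI : CharZero F := charZero_of_injective_algebraMap hinj
    obtain ⟨e, he, hI⟩ :=
      IsSemisimpleRing.ideal_eq_span_idempotent (Ideal.span {x} : Ideal (MonoidAlgebra k G))
    have hex : ∃ c : MonoidAlgebra k G, c • x = e := by
      have : e ∈ Ideal.span ({x} : Set (MonoidAlgebra k G)) := by
        rw [hI]; exact Ideal.subset_span rfl
      exact Submodule.mem_span_singleton.mp this
    have hxe : ∃ c : MonoidAlgebra k G, c • e = x := by
      have : x ∈ Ideal.span ({e} : Set (MonoidAlgebra k G)) := by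
        rw [← hI]; exact Ideal.subset_span rfl
      exact Submodule.mem_span_singleton.mp this
    obtain ⟨r, hr⟩ := hex
    obtain ⟨c, hc⟩ := hxe
    -- trace of φ e is zero
    have htre : Matrix.trace (liftRep k ρ e) = 0 := by
      rw [← hr, smul_eq_mul, _root_.map_mul, Matrix.trace_mul_comm, ← _root_.map_mul,
        trace_liftRep ρ χ h, hx r, map_zero]
    -- φ e is idempotent
    have hidem : liftRep k ρ e * liftRep k ρ e = liftRep k ρ e := by
      rw [← _root_.map_mul, he]
    have hzero : liftRep k ρ e = 0 := idem_trace_zero hidem htre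
    rw [← hc, smul_eq_mul, _root_.map_mul, hzero, mul_zero]

end Main

set_option maxHeartbeats 1000000 in
set_option synthInstance.maxHeartbeats 400000 in
/-- Let `k` be a field of characteristic zero and `G` a finite group.  If `ρ₁` and `ρ₂`
are representations of `G` over field extensions `F₁/k` and `F₂/k` having the same
`k`-valued character `χ`, then the `k`-algebras `Env_k(ρ₁)` and `Env_k(ρ₂)` are
isomorphic. -/
theorem envelope_welldefined {k : Type*} [Field k] [CharZero k]
    {F₁ F₂ : Type*} [Field F₁] [Field F₂] [Algebra k F₁] [Algebra k F₂]
    {G : Type*} [Group G] [Finite G] {n : ℕ}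
    (ρ₁ : G →* GL (Fin n) F₁) (ρ₂ : G →* GL (Fin n) F₂)
    (χ : G → k)
    (h₁ : ∀ g : G, repChar ρ₁ g = algebraMap k F₁ (χ g))
    (h₂ : ∀ g : G, repChar ρ₂ g = algebraMap k F₂ (χ g)) :
    Nonempty ((envelope k ρ₁) ≃ₐ[k] (envelope k ρ₂)) := by
  have := Fintype.ofFinite G
  set φ₁ := liftRep k ρ₁ with hφ₁
  set φ₂ := liftRep k ρ₂ with hφ₂
  have hk0 : ∀ x, φ₁ x = 0 ↔ φ₂ x = 0 := fun x =>
    (liftRep_eq_zero_iff ρ₁ χ h₁ x).trans (liftRep_eq_zero_iff ρ₂ χ h₂ x).symm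
  have hker : LinearMap.ker φ₁.toLinearMap = LinearMap.ker φ₂.toLinearMap := by
    ext x
    simpa only [LinearMap.mem_ker, AlgHom.toLinearMap_apply] using hk0 x
  let e₁ := LinearMap.quotKerEquivRange φ₁.toLinearMap
  let e₂ := LinearMap.quotKerEquivRange φ₂.toLinearMap
  let q := Submodule.quotEquivOfEq _ _ hker
  let E := (e₁.symm.trans q).trans e₂
  have hE : ∀ (x : MonoidAlgebra k G) hx,
      (E ⟨φ₁ x, hx⟩ : Matrix (Fin n) (Fin n) F₂) = φ₂ x := by
    intro x hx
    have h1 : e₁ (Submodule.Quotient.mk x) = ⟨φ₁ x, hx⟩ :=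
      Subtype.ext (φ₁.toLinearMap.quotKerEquivRange_apply_mk x)
    have : E ⟨φ₁ x, hx⟩ = e₂ (q (e₁.symm (e₁ (Submodule.Quotient.mk x)))) := by
      rw [h1]; rfl
    rw [this, LinearEquiv.symm_apply_apply]
    show (e₂ (q (Submodule.Quotient.mk x)) : Matrix (Fin n) (Fin n) F₂) = φ₂ x
    rw [Submodule.quotEquivOfEq_mk]
    exact φ₂.toLinearMap.quotKerEquivRange_apply_mk x
  have henv₁ : envelope k ρ₁ = φ₁.range := envelope_eq_range ρ₁
  have henv₂ : envelope k ρ₂ = φ₂.range := envelope_eq_range ρ₂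
  have hsub₁ : Subalgebra.toSubmodule (envelope k ρ₁) = LinearMap.range φ₁.toLinearMap := by
    rw [henv₁]; ext a
    simp [AlgHom.mem_range, LinearMap.mem_range]
  have hsub₂ : Subalgebra.toSubmodule (envelope k ρ₂) = LinearMap.range φ₂.toLinearMap := by
    rw [henv₂]; ext a
    simp [AlgHom.mem_range, LinearMap.mem_range]
  let E' : (envelope k ρ₁) ≃ₗ[k] (envelope k ρ₂) :=
    (LinearEquiv.ofEq _ _ hsub₁).trans (E.trans (LinearEquiv.ofEq _ _ hsub₂.symm))
  have hE' : ∀ (a : envelope k ρ₁) (x : MonoidAlgebra k G), φ₁ x = (a : Matrix (Fin n) (Fin n) F₁)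
      → ((E' a : envelope k ρ₂) : Matrix (Fin n) (Fin n) F₂) = φ₂ x := by
    intro a x hx
    have hmem : (a : Matrix (Fin n) (Fin n) F₁) ∈ LinearMap.range φ₁.toLinearMap := by
      rw [← hsub₁]; exact a.2
    show ((E ⟨(a : Matrix (Fin n) (Fin n) F₁), hmem⟩ :
      LinearMap.range φ₂.toLinearMap) : Matrix (Fin n) (Fin n) F₂) = φ₂ x
    have : (⟨(a : Matrix (Fin n) (Fin n) F₁), hmem⟩ :
        LinearMap.range φ₁.toLinearMap) = ⟨φ₁ x, hx ▸ hmem⟩ := Subtype.ext hx.symm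
    rw [this]
    exact hE x _
  have hmem₁ : ∀ a : envelope k ρ₁, ∃ x : MonoidAlgebra k G,
      φ₁ x = (a : Matrix (Fin n) (Fin n) F₁) := by
    intro a
    exact (SetLike.ext_iff.mp henv₁ (a : Matrix (Fin n) (Fin n) F₁)).mp a.2
  refine ⟨AlgEquiv.ofLinearEquiv E' ?_ ?_⟩
  · have h1 : φ₁ 1 = ((1 : envelope k ρ₁) : Matrix (Fin n) (Fin n) F₁) := by
      rw [_root_.map_one]; rfl
    apply Subtype.ext
    rw [hE' 1 1 h1, _root_.map_one]
    rfl
  · intro a b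
    obtain ⟨x, hx⟩ := hmem₁ a
    obtain ⟨y, hy⟩ := hmem₁ b
    have hab : φ₁ (x * y) = ((a * b : envelope k ρ₁) : Matrix (Fin n) (Fin n) F₁) := by
      rw [_root_.map_mul, hx, hy]; rfl
    apply Subtype.ext
    rw [hE' (a * b) (x * y) hab, _root_.map_mul]
    have ha := hE' a x hx
    have hb := hE' b y hy
    show _ = ((E' a : envelope k ρ₂) : Matrix (Fin n) (Fin n) F₂) *
      ((E' b : envelope k ρ₂) : Matrix (Fin n) (Fin n) F₂)
    rw [ha, hb]
end

section
/- Let G be a finite group, k ⊆ K a field extension, and suppose ρ : G → GL_n(K) is K-equivalent to a direct sum a₁ρ₁ ⊕ ⋯ ⊕ a_sρ_s, where ρ_i : G → GL_{n_i}(K) are representations and a_i ≥ 1 are integers. If each ρ_i descends to an intermediate field k ⊆ K_i ⊆ K with trdeg_k(K_i) = d_i, then ρ descends to an intermediate field k ⊆ K₀ ⊆ K with trdeg_k(K₀) ≤ d₁ + ⋯ + d_s. Consequently, ed(ρ) ≤ ed(ρ₁) + ⋯ + ed(ρ_s). -/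
set_option synthInstance.maxHeartbeats 1000000
set_option maxHeartbeats 3200000
set_option linter.unusedSectionVars false
set_option linter.unusedTactic false


open Matrix

/-- A representation `ρ : G → GL_n(K)` descends to an intermediate field `K₀` of `K/k` if
it is `K`-equivalent (conjugate) to the base change of some representation over `K₀`. -/
def Descends {k K : Type*} [Field k] [Field K] [Algebra k K] {G : Type*} [Group G] {n : ℕ}
    (ρ : G →* GL (Fin n) K) (K₀ : IntermediateField k K) : Prop :=
  ∃ ρ' : G →* GL (Fin n) K₀, ∃ M : GL (Fin n) K,
    ∀ g, ρ g = M * Units.map ((algebraMap K₀ K).mapMatrix).toMonoidHom (ρ' g) * M⁻¹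

/-- The transcendence degree of `K₀` over `k` is at most `d`. -/
def TrdegLE {k K : Type*} [Field k] [Field K] [Algebra k K]
    (K₀ : IntermediateField k K) (d : ℕ) : Prop :=
  ∀ s : Finset K₀,
    AlgebraicIndependent k (fun x : {y : K₀ // y ∈ s} => (x : K₀)) → s.card ≤ d

/-- The transcendence degree of `K₀` over `k` equals `d`. -/
def TrdegEq {k K : Type*} [Field k] [Field K] [Algebra k K]
    (K₀ : IntermediateField k K) (d : ℕ) : Prop :=
  TrdegLE K₀ d ∧
  (∃ s : Finset K₀,
      AlgebraicIndependent k (fun x : {y : K₀ // y ∈ s} => (x : K₀)) ∧ s.card = d)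

section FieldLemmas
open IntermediateField

variable {k K : Type*} [Field k] [Field K] [Algebra k K]

/-- Algebraic over the field adjoin iff algebraic over the ring adjoin. -/
theorem isAlgebraic_field_adjoin_iff (s : Set K) {x : K} :
    IsAlgebraic (adjoin k s) x ↔ IsAlgebraic (Algebra.adjoin k s) x := by
  set R := Algebra.adjoin k s with hR
  set L := adjoin k s
  have hle : R ≤ L.toSubalgebra := algebra_adjoin_le_adjoin k s
  letI : Algebra R L := (Subalgebra.inclusion hle).toRingHom.toAlgebra
  haveI : IsScalarTower (↥R) (↥L) K := IsScalarTower.of_algebraMap_eq (fun r => rfl)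
  have hinj : Function.Injective (algebraMap (↥R) (↥L)) := by
    intro a b h
    have h2 : ((algebraMap ↥R ↥L) a : K) = ((algebraMap ↥R ↥L) b : K) := congrArg Subtype.val h
    exact Subtype.ext h2
  have key : ∀ p : MvPolynomial s k, (MvPolynomial.aeval (Subtype.val : s → K) p : K) ∈ R := by
    intro p
    have h2 := Algebra.adjoin_range_eq_range_aeval k (Subtype.val : s → K)
    rw [Subtype.range_coe] at h2
    rw [hR, h2]
    exact ⟨p, rfl⟩
  haveI : IsFractionRing (↥R) (↥L) := by
    refine (isLocalization_iff _ _).mpr ⟨?_, ?_, ?_⟩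
    · rintro ⟨y, hy⟩
      rw [isUnit_iff_ne_zero]
      have hy0 : y ≠ 0 := nonZeroDivisors.ne_zero hy
      intro h0
      exact hy0 (hinj (by simpa using h0))
    · rintro z
      obtain ⟨r, q, hz⟩ := (mem_adjoin_iff k (z : K)).1 z.2
      by_cases hQ : (MvPolynomial.aeval (Subtype.val : s → K) q : K) = 0
      · refine ⟨(0, 1), ?_⟩
        have hz0 : (z : K) = 0 := by rw [hz, hQ, div_zero]
        apply Subtype.ext
        simpa using hz0
      · refine ⟨(⟨_, key r⟩, ⟨⟨_, key q⟩, mem_nonZeroDivisors_of_ne_zero (by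
          intro h0; exact hQ (congrArg Subtype.val h0))⟩), ?_⟩
        apply Subtype.ext
        show (z : K) * _ = _
        rw [hz]
        exact div_mul_cancel₀ _ hQ
    · intro a b h
      exact ⟨1, by rw [hinj h]⟩
  exact (IsFractionRing.isAlgebraic_iff (↥R) (↥L) K).symm

theorem isAlgebraic_mono_IF {L₁ L₂ : IntermediateField k K} (h : L₁ ≤ L₂) {x : K}
    (hx : IsAlgebraic L₁ x) : IsAlgebraic L₂ x := by
  letI : Algebra L₁ L₂ := (inclusion h).toRingHom.toAlgebra
  haveI : IsScalarTower (↥L₁) (↥L₂) K := IsScalarTower.of_algebraMap_eq (fun r => rfl)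
  exact hx.extendScalars (inclusion_injective h)

/-- transitivity: if b is algebraic over adjoin k S and x is algebraic over
adjoin k (insert b S) then x is algebraic over adjoin k S -/
theorem isAlgebraic_trans_adjoin {S : Set K} {b x : K}
    (hb : IsAlgebraic (adjoin k S) b)
    (hx : IsAlgebraic (adjoin k (insert b S)) x) :
    IsAlgebraic (adjoin k S) x := by
  set L := adjoin k S
  have h1 : adjoin k (insert b S) = restrictScalars k (adjoin (↥L) ({b} : Set K)) := by
    rw [adjoin_adjoin_left]; rw [Set.union_comm]; rw [Set.singleton_union]
  rw [h1] at hx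
  have hx' : IsAlgebraic (↥(adjoin (↥L) ({b} : Set K))) x := hx
  haveI : Algebra.IsIntegral (↥L) (↥(adjoin (↥L) ({b} : Set K))) := by
    have : Algebra.IsAlgebraic (↥L) (↥(adjoin (↥L) ({b} : Set K))) :=
      isAlgebraic_adjoin (fun y hy => by rw [Set.mem_singleton_iff] at hy; exact hy ▸ hb.isIntegral)
    exact Algebra.isAlgebraic_iff_isIntegral.mp this
  exact (isIntegral_trans x hx'.isIntegral).isAlgebraic

/-- Exchange lemma : if x is transcendental over F and algebraic over F(y),
then y is algebraic over F(x). -/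
theorem exchange {F : Type*} [Field F] [Algebra F K] {x y : K} (hx : Transcendental F x)
    (h : IsAlgebraic (adjoin F ({y} : Set K)) x) :
    IsAlgebraic (adjoin F ({x} : Set K)) y := by
  by_cases hy : IsAlgebraic F y
  · -- then x would be algebraic over F, contradiction
    exfalso
    apply hx
    haveI : Algebra.IsIntegral F (↥(adjoin F ({y} : Set K))) :=
      Algebra.isAlgebraic_iff_isIntegral.mp
        (isAlgebraic_adjoin (fun z hz => by rw [Set.mem_singleton_iff] at hz; exact hz ▸ hy.isIntegral))
    exact (isIntegral_trans x h.isIntegral).isAlgebraic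
  · by_contra hb
    -- y is transcendental over F(x), hence over Algebra.adjoin F {x}
    have hyt : Transcendental (Algebra.adjoin F ({x} : Set K)) y := by
      intro halg
      exact hb ((isAlgebraic_field_adjoin_iff _).mpr halg)
    -- single-element families are independent
    have hxi : AlgebraicIndependent F (fun _ : Unit => x) :=
      algebraicIndependent_unique_type_iff.mpr hx
    have hyi : AlgebraicIndependent F (fun _ : Unit => y) :=
      algebraicIndependent_unique_type_iff.mpr hy
    -- build the pair (x, y) : independent
    have hrx : Set.range (fun _ : Unit => x) = ({x} : Set K) := Set.range_const
    have hpair : AlgebraicIndependent F (fun o : Option Unit => o.elim y (fun _ => x)) := by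
      rw [hxi.option_iff_transcendental y, hrx]
      exact hyt
    -- swap the pair
    have hpair' : AlgebraicIndependent F (fun o : Option Unit => o.elim x (fun _ => y)) := by
      refine (algebraicIndependent_equiv'
        (⟨fun o => o.elim (some ()) (fun _ => none), fun o => o.elim (some ()) (fun _ => none),
         fun o => by cases o <;> rfl, fun o => by cases o <;> rfl⟩ : Option Unit ≃ Option Unit)
        ?_).mp hpair
      funext o; cases o <;> rfl
    -- hence x is transcendental over adjoin F {y}
    have hry : Set.range (fun _ : Unit => y) = ({y} : Set K) := Set.range_const
    have := (hyi.option_iff_transcendental x).mp hpair'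
    rw [hry] at this
    exact this ((isAlgebraic_field_adjoin_iff _).mp h)

theorem transcendental_off {m : ℕ} {u : Fin m → K} (hu : AlgebraicIndependent k u) (i₀ : Fin m) :
    Transcendental (Algebra.adjoin k (u '' {i | i ≠ i₀})) (u i₀) := by
  classical
  have h2 : AlgebraicIndependent k (fun i : {i : Fin m // i ≠ i₀} => u i.1) :=
    hu.comp Subtype.val Subtype.val_injective
  have h1 : AlgebraicIndependent k
      (fun o : Option {i : Fin m // i ≠ i₀} => o.elim (u i₀) (fun i => u i.1)) := by
    refine (algebraicIndependent_equiv' (Equiv.optionSubtypeNe i₀) ?_).mpr hu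
    funext o
    cases o with
    | none => simp
    | some i => simp
  have h3 := (h2.option_iff_transcendental (u i₀)).mp h1
  have hr : Set.range (fun i : {i : Fin m // i ≠ i₀} => u i.1) = u '' {i | i ≠ i₀} := by
    rw [Set.image_eq_range]; rfl
  rwa [hr] at h3

/-- Main counting lemma: an algebraically independent family, each of whose members is
algebraic over `k(B)`, has at most `|B|` elements. -/
theorem card_le_of_algebraic {m : ℕ} (u : Fin m → K) (hu : AlgebraicIndependent k u)
    (B : Finset K) (halg : ∀ i, IsAlgebraic (adjoin k (B : Set K)) (u i)) :
    m ≤ B.card := by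
  classical
  set T : ℕ → Set K := fun j => u '' {i : Fin m | (i : ℕ) < j} with hT
  have claim : ∀ j, j ≤ m → ∃ Bj : Finset K, ↑Bj ⊆ (B : Set K) ∧ Bj.card + j ≤ B.card ∧
      ∀ y : K, IsAlgebraic (adjoin k (B : Set K)) y →
        IsAlgebraic (adjoin k (T j ∪ ↑Bj)) y := by
    intro j
    induction j with
    | zero =>
      intro _
      exact ⟨B, subset_rfl, by simp, fun y hy =>
        isAlgebraic_mono_IF (adjoin.mono _ _ _ Set.subset_union_right) hy⟩
    | succ j ih =>
      intro hjm
      obtain ⟨Bj, hBjB, hcard, hinv⟩ := ih (Nat.le_of_succ_le hjm)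
      set i₀ : Fin m := ⟨j, hjm⟩ with hi₀
      set x : K := u i₀ with hxdef
      -- x is algebraic over adjoin k (T j ∪ Bj)
      have hx_alg : IsAlgebraic (adjoin k (T j ∪ ↑Bj)) x := hinv x (halg i₀)
      -- x is transcendental over adjoin k (T j)
      have hx_trans : ∀ C : Finset K, (C : Set K) ⊆ T j →
          ¬ IsAlgebraic (adjoin k (T j)) x := by
        intro _ _ hcon
        have h1 : IsAlgebraic (Algebra.adjoin k (T j)) x :=
          (isAlgebraic_field_adjoin_iff _).mp hcon
        have h2 : Algebra.adjoin k (T j) ≤ Algebra.adjoin k (u '' {i | i ≠ i₀}) := by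
          apply Algebra.adjoin_mono
          rintro _ ⟨i, hi, rfl⟩
          exact ⟨i, fun h => absurd hi (by simp [h, hi₀]), rfl⟩
        exact transcendental_off hu i₀ (h1.tower_top_of_subalgebra_le h2)
      -- minimal subset of Bj over which x is algebraic
      have hex : ∃ c : ℕ, ∃ C : Finset K, C ⊆ Bj ∧ C.card = c ∧
          IsAlgebraic (adjoin k (T j ∪ ↑C)) x :=
        ⟨Bj.card, Bj, subset_rfl, rfl, hx_alg⟩
      classical
      obtain ⟨C, hCBj, hCcard, hCalg⟩ := Nat.find_spec hex
      have hmin : ∀ C' : Finset K, C' ⊆ Bj → IsAlgebraic (adjoin k (T j ∪ ↑C')) x →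
          Nat.find hex ≤ C'.card := fun C' h1 h2 =>
        Nat.find_min' hex ⟨C', h1, rfl, h2⟩
      -- C is nonempty
      have hCne : C.Nonempty := by
        rcases C.eq_empty_or_nonempty with h | h
        · exfalso
          apply hx_trans ∅ (by simp)
          have : IsAlgebraic (adjoin k (T j ∪ (↑C : Set K))) x := hCalg
          rwa [h, Finset.coe_empty, Set.union_empty] at this
        · exact h
      obtain ⟨b, hbC⟩ := hCne
      -- exchange at b
      have hLtrans : Transcendental (adjoin k (T j ∪ ↑(C.erase b))) x := by
        intro hcon
        have := hmin (C.erase b) ((Finset.erase_subset _ _).trans hCBj) hcon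
        rw [Finset.card_erase_of_mem hbC, ← hCcard] at this
        have hpos : 0 < C.card := Finset.card_pos.mpr ⟨b, hbC⟩
        omega
      have key : restrictScalars k (adjoin (↥(adjoin k (T j ∪ ↑(C.erase b))))
          ({b} : Set K)) = adjoin k (T j ∪ ↑C) := by
        rw [adjoin_adjoin_left]
        congr 1
        rw [Finset.coe_erase]
        rw [Set.union_assoc, Set.diff_union_self]
        congr 1
        rw [Set.union_comm, Set.union_eq_self_of_subset_left]
        simpa using hbC
      have hxb : IsAlgebraic (↥(adjoin (↥(adjoin k (T j ∪ ↑(C.erase b))))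
          ({b} : Set K))) x := by
        have : IsAlgebraic (↥(restrictScalars k (adjoin (↥(adjoin k (T j ∪ ↑(C.erase b))))
            ({b} : Set K)))) x := by rw [key]; exact hCalg
        exact this
      have hbx : IsAlgebraic (↥(adjoin (↥(adjoin k (T j ∪ ↑(C.erase b))))
          ({x} : Set K))) b := exchange hLtrans hxb
      -- b is algebraic over adjoin k (T (j+1) ∪ (Bj.erase b))
      have hb_alg : IsAlgebraic (adjoin k (T (j+1) ∪ ↑(Bj.erase b))) b := by
        have key2 : restrictScalars k (adjoin (↥(adjoin k (T j ∪ ↑(C.erase b))))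
            ({x} : Set K)) = adjoin k ((T j ∪ ↑(C.erase b)) ∪ {x}) := adjoin_adjoin_left _ _ _
        have h1 : IsAlgebraic (↥(adjoin k ((T j ∪ ↑(C.erase b)) ∪ {x}))) b := by
          rw [← key2]; exact hbx
        apply isAlgebraic_mono_IF (adjoin.mono _ _ _ ?_) h1
        rintro z (⟨zT | zC⟩ | hz)
        · rcases zT with ⟨i, hi, rfl⟩
          exact Or.inl ⟨i, by simp at hi ⊢; omega, rfl⟩
        · refine Or.inr ?_
          simp only [Finset.coe_erase, Set.mem_diff] at zC ⊢
          exact ⟨hCBj zC.1, zC.2⟩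
        · rcases hz with rfl
          exact Or.inl ⟨i₀, by simp [hi₀], rfl⟩
      -- conclude
      refine ⟨Bj.erase b, ?_, ?_, ?_⟩
      · exact (Finset.coe_subset.mpr (Finset.erase_subset _ _)).trans hBjB
      · have hbBj : b ∈ Bj := hCBj hbC
        rw [Finset.card_erase_of_mem hbBj]
        have hpos : 0 < Bj.card := Finset.card_pos.mpr ⟨b, hbBj⟩
        omega
      · intro y hy
        have h1 : IsAlgebraic (adjoin k (T j ∪ ↑Bj)) y := hinv y hy
        have h2 : IsAlgebraic (adjoin k (insert b (T (j+1) ∪ ↑(Bj.erase b)))) y := by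
          apply isAlgebraic_mono_IF (adjoin.mono _ _ _ ?_) h1
          rintro z (⟨i, hi, rfl⟩ | hz)
          · exact Or.inr (Or.inl ⟨i, by simp at hi ⊢; omega, rfl⟩)
          · by_cases hzb : z = b
            · exact Or.inl hzb
            · exact Or.inr (Or.inr (by simp only [Finset.coe_erase, Set.mem_diff, Set.mem_singleton_iff]; exact ⟨hz, hzb⟩))
        exact isAlgebraic_trans_adjoin hb_alg h2
  obtain ⟨Bm, _, hcard, _⟩ := claim m le_rfl
  omega

/-- From a trdeg bound, extract a finite set over which the whole field is algebraic. -/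
theorem exists_base_of_trdegEq (Ki : IntermediateField k K) (d : ℕ) (h : TrdegEq Ki d) :
    ∃ B : Finset K, (B : Set K) ⊆ (Ki : Set K) ∧ B.card ≤ d ∧
      ∀ x ∈ Ki, IsAlgebraic (adjoin k (B : Set K)) x := by
  classical
  obtain ⟨hle, s, hs_indep, hs_card⟩ := h
  refine ⟨s.image (fun y : ↥Ki => (y : K)), ?_, ?_, ?_⟩
  · intro z hz
    simp only [Finset.coe_image, Set.mem_image] at hz
    obtain ⟨y, _, rfl⟩ := hz
    exact y.2
  · rw [Finset.card_image_of_injective _ Subtype.val_injective, hs_card]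
  · intro x hx
    set x' : ↥Ki := ⟨x, hx⟩ with hx'def
    by_cases hmem : x' ∈ s
    · -- x is one of the generators, hence in the adjoin
      have hxin : x ∈ adjoin k ((s.image (fun y : ↥Ki => (y : K)) : Finset K) : Set K) := by
        apply subset_adjoin
        simp only [Finset.coe_image, Set.mem_image, Finset.mem_coe]
        exact ⟨x', hmem, rfl⟩
      exact isAlgebraic_algebraMap (A := K)
        (⟨x, hxin⟩ : ↥(adjoin k ((s.image (fun y : ↥Ki => (y : K)) : Finset K) : Set K)))
    · by_contra hcon
      -- x is transcendental over the ring adjoin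
      have htr : Transcendental (Algebra.adjoin k
          ((s.image (fun y : ↥Ki => (y : K)) : Finset K) : Set K)) x := by
        intro halg
        exact hcon ((isAlgebraic_field_adjoin_iff _).mpr halg)
      -- the K-valued family on s
      have h2 : AlgebraicIndependent k (fun y : {y : ↥Ki // y ∈ s} => ((y : ↥Ki) : K)) := by
        have := hs_indep.map' (f := Ki.val) (Subtype.val_injective)
        exact this
      have hrange : Set.range (fun y : {y : ↥Ki // y ∈ s} => ((y : ↥Ki) : K))
          = ((s.image (fun y : ↥Ki => (y : K)) : Finset K) : Set K) := by
        ext z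
        simp only [Set.mem_range, Finset.coe_image, Set.mem_image, Finset.mem_coe]
        constructor
        · rintro ⟨y, rfl⟩; exact ⟨y.1, y.2, rfl⟩
        · rintro ⟨y, hy, rfl⟩; exact ⟨⟨y, hy⟩, rfl⟩
      have hopt : AlgebraicIndependent k
          (fun o : Option {y : ↥Ki // y ∈ s} => o.elim x (fun y => ((y : ↥Ki) : K))) := by
        rw [h2.option_iff_transcendental x, hrange]
        exact htr
      -- pull back to ↥Ki
      have hopt' : AlgebraicIndependent k
          (fun o : Option {y : ↥Ki // y ∈ s} => o.elim x' (fun y => (y : ↥Ki))) := by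
        apply AlgebraicIndependent.of_comp (f := Ki.val)
        convert hopt using 1
        funext o
        cases o <;> rfl
      -- reindex to the inserted finset
      have hins : AlgebraicIndependent k
          (fun z : {y : ↥Ki // y ∈ insert x' s} => (z : ↥Ki)) := by
        refine (algebraicIndependent_equiv'
          (⟨fun o => o.elim ⟨x', Finset.mem_insert_self _ _⟩
              (fun y => ⟨y.1, Finset.mem_insert_of_mem y.2⟩),
            fun z => if h : z.1 ∈ s then some ⟨z.1, h⟩ else none,
            fun o => by
              cases o with
              | none => simp [hmem]
              | some y => simp [y.2]
            ,
            fun z => by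
              by_cases h : z.1 ∈ s
              · simp only [dif_pos h]
                exact Subtype.ext rfl
              · simp only [dif_neg h]
                have hzx : z.1 = x' := by
                  rcases Finset.mem_insert.mp z.2 with h' | h'
                  · exact h'
                  · exact absurd h' h
                exact Subtype.ext hzx.symm⟩ : Option {y : ↥Ki // y ∈ s} ≃ {y : ↥Ki // y ∈ insert x' s})
          ?_).mp hopt'
        funext o
        cases o <;> rfl
      have := hle (insert x' s) hins
      rw [Finset.card_insert_of_notMem hmem, hs_card] at this
      omega

/-- The compositum construction. -/
theorem compositum_exists {s : ℕ} (Ki : Fin s → IntermediateField k K) (d : Fin s → ℕ)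
    (hd : ∀ i, TrdegEq (Ki i) (d i)) :
    ∃ K₀ : IntermediateField k K, (∀ i, Ki i ≤ K₀) ∧
      (∀ t : Finset K₀,
        AlgebraicIndependent k (fun x : {y : K₀ // y ∈ t} => (x : K₀)) → t.card ≤ ∑ i, d i) := by
  classical
  choose B hBsub hBcard hBalg using fun i => exists_base_of_trdegEq (Ki i) (d i) (hd i)
  set Ball : Finset K := Finset.univ.biUnion B with hBall
  have hBallcard : Ball.card ≤ ∑ i, d i :=
    (Finset.card_biUnion_le).trans (Finset.sum_le_sum (fun i _ => hBcard i))
  set Lstar := adjoin k ((Ball : Set K)) with hLstar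
  have halg_gen : ∀ x ∈ ⋃ i, ((Ki i : Set K)), IsAlgebraic (↥Lstar) x := by
    intro x hx
    obtain ⟨S, ⟨i, rfl⟩, hxS⟩ := hx
    refine isAlgebraic_mono_IF (adjoin.mono _ _ _ ?_) (hBalg i x hxS)
    intro z hz
    exact Finset.mem_coe.mpr (Finset.mem_biUnion.mpr ⟨i, Finset.mem_univ i, Finset.mem_coe.mp hz⟩)
  set K₀ : IntermediateField k K :=
    restrictScalars k (adjoin (↥Lstar) (⋃ i, ((Ki i : Set K)))) with hK₀
  haveI halgK₀ : Algebra.IsAlgebraic (↥Lstar) ↥(adjoin (↥Lstar) (⋃ i, ((Ki i : Set K)))) :=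
    isAlgebraic_adjoin (fun x hx => (halg_gen x hx).isIntegral)
  have hmem_alg : ∀ x : K, x ∈ K₀ → IsAlgebraic (↥Lstar) x := by
    intro x hx
    have hx' : x ∈ adjoin (↥Lstar) (⋃ i, ((Ki i : Set K))) := hx
    have := halgK₀.isAlgebraic ⟨x, hx'⟩
    exact IntermediateField.isAlgebraic_iff.mp this
  refine ⟨K₀, ?_, ?_⟩
  · intro i x hx
    show x ∈ adjoin (↥Lstar) (⋃ i, ((Ki i : Set K)))
    exact subset_adjoin _ _ (Set.mem_iUnion.mpr ⟨i, hx⟩)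
  · intro t hind
    have h1 : AlgebraicIndependent k (fun y : {y : ↥K₀ // y ∈ t} => ((y : ↥K₀) : K)) :=
      hind.map' (f := K₀.val) (Subtype.val_injective)
    have hu_ind := h1.comp (⇑t.equivFin.symm) t.equivFin.symm.injective
    have hfin := card_le_of_algebraic _ hu_ind Ball
      (fun p => hmem_alg _ (t.equivFin.symm p).1.2)
    exact hfin.trans hBallcard

end FieldLemmas

section MatrixLemmas

theorem blockDiagonal'_mulVec' {o : Type*} [Fintype o] [DecidableEq o] {m' : o → Type*}
    [∀ i, Fintype (m' i)] {α : Type*} [CommRing α]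
    (Mb : (i : o) → Matrix (m' i) (m' i) α)
    (w : ((i : o) × m' i) → α) (i : o) (x : m' i) :
    (blockDiagonal' Mb).mulVec w ⟨i, x⟩ = (Mb i).mulVec (fun y => w ⟨i, y⟩) x := by
  classical
  rw [mulVec, dotProduct, ← Finset.univ_sigma_univ, Finset.sum_sigma]
  rw [Finset.sum_eq_single i]
  · rw [mulVec, dotProduct]
    congr 1
    funext y
    rw [blockDiagonal'_apply_eq]
  · intro i' _ hne
    apply Finset.sum_eq_zero
    intro y _
    rw [blockDiagonal'_apply_ne _ _ _ (Ne.symm hne), zero_mul]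
  · intro h
    exact absurd (Finset.mem_univ i) h

theorem blockDiagonal_mulVec' {m n : Type*} [Fintype m] [Fintype n] [DecidableEq n]
    {α : Type*} [CommRing α]
    (N : n → Matrix m m α) (w : m × n → α) (x : m) (j : n) :
    (blockDiagonal N).mulVec w (x, j) = (N j).mulVec (fun y => w (y, j)) x := by
  classical
  rw [mulVec, dotProduct, ← Finset.univ_product_univ, Finset.sum_product]
  rw [mulVec, dotProduct, Finset.sum_comm]
  rw [Finset.sum_eq_single j]
  · congr 1
    funext y
    rw [blockDiagonal_apply_eq]
  · intro j' _ hne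
    apply Finset.sum_eq_zero
    intro y _
    rw [blockDiagonal_apply_ne _ _ _ (Ne.symm hne), zero_mul]
  · intro h
    exact absurd (Finset.mem_univ j) h

/-- per-block expansion into `a i` copies -/
def bb {K : Type*} [CommRing K] {s : ℕ} (a nn : Fin s → ℕ) (i : Fin s)
    (A : Matrix (Fin (nn i)) (Fin (nn i)) K) :
    Matrix (Fin (a i) × Fin (nn i)) (Fin (a i) × Fin (nn i)) K :=
  (blockDiagonal (fun _ : Fin (a i) => A)).submatrix
    (Equiv.prodComm (Fin (a i)) (Fin (nn i))) (Equiv.prodComm (Fin (a i)) (Fin (nn i)))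

theorem bb_mul {K : Type*} [CommRing K] {s : ℕ} (a nn : Fin s → ℕ) (i : Fin s)
    (A B : Matrix (Fin (nn i)) (Fin (nn i)) K) :
    bb a nn i A * bb a nn i B = bb a nn i (A * B) := by
  unfold bb
  rw [submatrix_mul_equiv _ _ _ (Equiv.prodComm (Fin (a i)) (Fin (nn i))) _]
  rw [← blockDiagonal_mul]

theorem bb_one {K : Type*} [CommRing K] {s : ℕ} (a nn : Fin s → ℕ) (i : Fin s) :
    bb (K := K) a nn i 1 = 1 := by
  unfold bb
  rw [show (fun _ : Fin (a i) => (1 : Matrix (Fin (nn i)) (Fin (nn i)) K)) = 1 from rfl,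
    blockDiagonal_one, submatrix_one_equiv]

theorem bb_mulVec {K : Type*} [CommRing K] {s : ℕ} (a nn : Fin s → ℕ) (i : Fin s)
    (A : Matrix (Fin (nn i)) (Fin (nn i)) K)
    (w : Fin (a i) × Fin (nn i) → K) (j : Fin (a i)) (x : Fin (nn i)) :
    (bb a nn i A).mulVec w (j, x) = A.mulVec (fun y => w (j, y)) x := by
  unfold bb
  rw [submatrix_mulVec_equiv]
  show (blockDiagonal fun _ => A).mulVec (w ∘ _) (x, j) = _
  rw [blockDiagonal_mulVec']
  rfl

/-- If the conjugate of `ρ` by `M` has all entries in `K₀`, then `ρ` descends to `K₀`. -/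
theorem descends_of_entries_mem {k K : Type*} [Field k] [Field K] [Algebra k K]
    {G : Type*} [Group G] {n : ℕ} (ρ : G →* GL (Fin n) K) (K₀ : IntermediateField k K)
    (M : GL (Fin n) K)
    (hmem : ∀ g (p q : Fin n), ((M⁻¹ * ρ g * M : GL (Fin n) K) : Matrix (Fin n) (Fin n) K) p q ∈ K₀) :
    Descends ρ K₀ := by
  set T : G →* GL (Fin n) K := ((MulAut.conj M⁻¹).toMonoidHom.comp ρ) with hT
  have hTval : ∀ g, ((T g : GL (Fin n) K) : Matrix (Fin n) (Fin n) K)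
      = ((M⁻¹ * ρ g * M : GL (Fin n) K) : Matrix (Fin n) (Fin n) K) := by
    intro g
    simp [hT, MulAut.conj]
  have hmem' : ∀ g (p q : Fin n), ((T g : GL (Fin n) K) : Matrix (Fin n) (Fin n) K) p q ∈ K₀ := by
    intro g p q; rw [hTval]; exact hmem g p q
  set mat : G → Matrix (Fin n) (Fin n) K₀ := fun g p q => ⟨_, hmem' g p q⟩ with hmat
  have hmapinj : Function.Injective
      (fun A : Matrix (Fin n) (Fin n) K₀ => A.map (algebraMap K₀ K)) :=
    Matrix.map_injective (fun a b h => Subtype.ext h)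
  have hmap : ∀ g, (mat g).map (algebraMap K₀ K)
      = ((T g : GL (Fin n) K) : Matrix (Fin n) (Fin n) K) := by
    intro g; funext p q; rfl
  have hmul : ∀ g h, mat g * mat h = mat (g * h) := by
    intro g h
    apply hmapinj
    show (mat g * mat h).map (algebraMap K₀ K) = (mat (g * h)).map (algebraMap K₀ K)
    rw [Matrix.map_mul, hmap, hmap, hmap, ← Units.val_mul, ← map_mul T]
  have hone : mat 1 = 1 := by
    apply hmapinj
    show (mat 1).map (algebraMap K₀ K) = (1 : Matrix (Fin n) (Fin n) K₀).map (algebraMap K₀ K)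
    rw [hmap, Matrix.map_one _ (map_zero _) (map_one _), map_one T, Units.val_one]
  have hinv1 : ∀ g, mat g * mat g⁻¹ = 1 := by
    intro g; rw [hmul, mul_inv_cancel, hone]
  have hinv2 : ∀ g, mat g⁻¹ * mat g = 1 := by
    intro g; rw [hmul, inv_mul_cancel, hone]
  set ρ' : G →* GL (Fin n) K₀ := MonoidHom.mk' (fun g => ⟨mat g, mat g⁻¹, hinv1 g, hinv2 g⟩)
    (fun g h => Units.ext (by simp [← hmul])) with hρ'
  refine ⟨ρ', M, fun g => ?_⟩
  have h1 : Units.map ((algebraMap K₀ K).mapMatrix).toMonoidHom (ρ' g) = M⁻¹ * ρ g * M := by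
    apply Units.ext
    show ((algebraMap K₀ K).mapMatrix) (mat g) = ((M⁻¹ * ρ g * M : GL (Fin n) K) : Matrix (Fin n) (Fin n) K)
    rw [RingHom.mapMatrix_apply, hmap, hTval]
  rw [h1]
  group

theorem conj_entries_mem {k K : Type*} [Field k] [Field K] [Algebra k K]
    {G : Type*} [Group G] {n s : ℕ} {nn a : Fin s → ℕ}
    (ρ : G →* GL (Fin n) K)
    (ρs : (i : Fin s) → (G →* GL (Fin (nn i)) K))
    (e : (Fin n → K) ≃ₗ[K] (((i : Fin s) × (Fin (a i) × Fin (nn i))) → K))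
    (he : ∀ (g : G) (v : Fin n → K) (i : Fin s) (j : Fin (a i)),
      (fun x => e ((ρ g : Matrix (Fin n) (Fin n) K).mulVec v) ⟨i, j, x⟩)
        = (ρs i g : Matrix (Fin (nn i)) (Fin (nn i)) K).mulVec
            (fun y => e v ⟨i, j, y⟩))
    (Ki : (i : Fin s) → IntermediateField k K)
    (hdesc : ∀ i, Descends (ρs i) (Ki i))
    (K₀ : IntermediateField k K) (hsub : ∀ i, Ki i ≤ K₀) :
    ∃ M : GL (Fin n) K, ∀ g (p q : Fin n),
      ((M⁻¹ * ρ g * M : GL (Fin n) K) : Matrix (Fin n) (Fin n) K) p q ∈ K₀ := by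
  classical
  choose ρ's Ms hMs using hdesc
  have hcard : Fintype.card (Fin n)
      = Fintype.card ((i : Fin s) × (Fin (a i) × Fin (nn i))) := by
    have h1 := e.finrank_eq
    rwa [Module.finrank_pi, Module.finrank_pi] at h1
  let c : Fin n ≃ (i : Fin s) × (Fin (a i) × Fin (nn i)) := Fintype.equivOfCardEq hcard
  set Dg : G → Matrix ((i : Fin s) × (Fin (a i) × Fin (nn i))) _ K :=
    fun g => blockDiagonal' (fun i => bb a nn i ((ρs i g : Matrix _ _ K))) with hDg
  set D0 : G → Matrix ((i : Fin s) × (Fin (a i) × Fin (nn i))) _ K :=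
    fun g => blockDiagonal' (fun i => bb a nn i
      (((ρ's i g : Matrix _ _ (Ki i))).map (algebraMap (Ki i) K))) with hD0
  set P : Matrix ((i : Fin s) × (Fin (a i) × Fin (nn i))) _ K :=
    blockDiagonal' (fun i => bb a nn i ((Ms i : Matrix _ _ K))) with hP
  set Pinv : Matrix ((i : Fin s) × (Fin (a i) × Fin (nn i))) _ K :=
    blockDiagonal' (fun i => bb a nn i (((Ms i)⁻¹ : GL _ K) : Matrix _ _ K)) with hPinv
  have hPP : P * Pinv = 1 := by
    rw [hP, hPinv, ← blockDiagonal'_mul]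
    have h2 : (fun i => bb a nn i ((Ms i : Matrix _ _ K))
        * bb a nn i (((Ms i)⁻¹ : GL _ K) : Matrix _ _ K))
        = fun i => (1 : Matrix (Fin (a i) × Fin (nn i)) (Fin (a i) × Fin (nn i)) K) := by
      funext i
      rw [bb_mul, ← Units.val_mul, mul_inv_cancel, Units.val_one, bb_one]
    rw [h2]
    exact blockDiagonal'_one
  have hPP' : Pinv * P = 1 := by
    rw [hP, hPinv, ← blockDiagonal'_mul]
    have h2 : (fun i => bb a nn i (((Ms i)⁻¹ : GL _ K) : Matrix _ _ K)
        * bb a nn i ((Ms i : Matrix _ _ K)))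
        = fun i => (1 : Matrix (Fin (a i) × Fin (nn i)) (Fin (a i) × Fin (nn i)) K) := by
      funext i
      rw [bb_mul, ← Units.val_mul, inv_mul_cancel, Units.val_one, bb_one]
    rw [h2]
    exact blockDiagonal'_one
  have hDfact : ∀ g, Dg g = P * D0 g * Pinv := by
    intro g
    rw [hDg, hP, hD0, hPinv, ← blockDiagonal'_mul, ← blockDiagonal'_mul]
    apply congrArg blockDiagonal'
    funext i
    beta_reduce
    rw [bb_mul, bb_mul]
    congr 1
    have h1 := congrArg Units.val (hMs i g)
    simp only [Units.val_mul, Units.coe_map, RingHom.toMonoidHom_eq_coe,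
      MonoidHom.coe_coe, RingHom.mapMatrix_apply] at h1
    rw [h1]
  set W : Matrix ((i : Fin s) × (Fin (a i) × Fin (nn i))) (Fin n) K :=
    LinearMap.toMatrix' e.toLinearMap with hW
  set W' : Matrix (Fin n) ((i : Fin s) × (Fin (a i) × Fin (nn i))) K :=
    LinearMap.toMatrix' e.symm.toLinearMap with hW'
  have hWmv : ∀ v, W.mulVec v = e v := by
    intro v
    rw [hW, ← Matrix.toLin'_apply, Matrix.toLin'_toMatrix']
    rfl
  have hWW' : W * W' = 1 := by
    rw [hW, hW', ← LinearMap.toMatrix'_comp]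
    have h2 : (e.toLinearMap ∘ₗ e.symm.toLinearMap) = LinearMap.id := by ext v; simp
    rw [h2, LinearMap.toMatrix'_id]
  have hW'W : W' * W = 1 := by
    rw [hW, hW', ← LinearMap.toMatrix'_comp]
    have h2 : (e.symm.toLinearMap ∘ₗ e.toLinearMap) = LinearMap.id := by ext v; simp
    rw [h2, LinearMap.toMatrix'_id]
  have hinter : ∀ g, W * (ρ g : Matrix (Fin n) (Fin n) K) = Dg g * W := by
    intro g
    apply Matrix.toLin'.injective
    apply LinearMap.ext
    intro v
    show ((W * (ρ g : Matrix (Fin n) (Fin n) K)).mulVec v) = ((Dg g * W).mulVec v)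
    rw [← Matrix.mulVec_mulVec, ← Matrix.mulVec_mulVec, hWmv, hWmv]
    funext p
    obtain ⟨i, j, x⟩ := p
    rw [hDg, blockDiagonal'_mulVec']
    calc e ((ρ g : Matrix (Fin n) (Fin n) K).mulVec v) ⟨i, j, x⟩
        = (ρs i g : Matrix _ _ K).mulVec (fun y => e v ⟨i, j, y⟩) x := congrFun (he g v i j) x
      _ = (bb a nn i ((ρs i g : Matrix _ _ K))).mulVec (fun q => e v ⟨i, q⟩) (j, x) := by
          rw [bb_mulVec]
  set V : Matrix (Fin n) (Fin n) K := W.submatrix ⇑c _root_.id with hV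
  set V' : Matrix (Fin n) (Fin n) K := W'.submatrix _root_.id ⇑c with hV'
  have hVV' : V * V' = 1 := by
    rw [hV, hV']
    have h2 := submatrix_mul_equiv W W' ⇑c (Equiv.refl (Fin n)) ⇑c
    simp only [Equiv.coe_refl] at h2
    rw [h2, hWW', submatrix_one_equiv]
  have hV'V : V' * V = 1 := by
    rw [hV, hV']
    have h2 := submatrix_mul_equiv W' W _root_.id c _root_.id
    rw [h2, hW'W]
    exact submatrix_id_id _
  set Vu : GL (Fin n) K := ⟨V, V', hVV', hV'V⟩ with hVu
  set Pn : Matrix (Fin n) (Fin n) K := P.submatrix ⇑c ⇑c with hPn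
  set Pinvn : Matrix (Fin n) (Fin n) K := Pinv.submatrix ⇑c ⇑c with hPinvn
  have hPnPinvn : Pn * Pinvn = 1 := by
    rw [hPn, hPinvn, submatrix_mul_equiv P Pinv ⇑c c ⇑c, hPP, submatrix_one_equiv]
  have hPinvnPn : Pinvn * Pn = 1 := by
    rw [hPn, hPinvn, submatrix_mul_equiv Pinv P ⇑c c ⇑c, hPP', submatrix_one_equiv]
  set Pu : GL (Fin n) K := ⟨Pn, Pinvn, hPnPinvn, hPinvnPn⟩ with hPu
  refine ⟨Vu⁻¹ * Pu, ?_⟩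
  intro g p q
  have hval : (((Vu⁻¹ * Pu)⁻¹ * ρ g * (Vu⁻¹ * Pu) : GL (Fin n) K) : Matrix (Fin n) (Fin n) K)
      = (D0 g).submatrix ⇑c ⇑c := by
    have hu : (Vu⁻¹ * Pu)⁻¹ * ρ g * (Vu⁻¹ * Pu) = Pu⁻¹ * (Vu * ρ g * Vu⁻¹) * Pu := by
      group
    rw [hu]
    show Pinvn * (V * (ρ g : Matrix (Fin n) (Fin n) K) * V') * Pn = _
    have hstep1 : V * (ρ g : Matrix (Fin n) (Fin n) K) * V' = (Dg g).submatrix ⇑c ⇑c := by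
      have e1 : V * (ρ g : Matrix (Fin n) (Fin n) K)
          = ((Dg g).submatrix ⇑c ⇑c) * V := by
        have t1 := submatrix_mul_equiv W (ρ g : Matrix (Fin n) (Fin n) K)
          ⇑c (Equiv.refl (Fin n)) _root_.id
        simp only [Equiv.coe_refl] at t1
        rw [submatrix_id_id] at t1
        have t2 := submatrix_mul_equiv (Dg g) W ⇑c c _root_.id
        rw [hV]
        calc W.submatrix (⇑c) _root_.id * (ρ g : Matrix (Fin n) (Fin n) K)
            = (W * (ρ g : Matrix (Fin n) (Fin n) K)).submatrix ⇑c _root_.id := by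
              rw [← t1]
          _ = (Dg g * W).submatrix ⇑c _root_.id := by rw [hinter]
          _ = (Dg g).submatrix ⇑c ⇑c * W.submatrix ⇑c _root_.id := t2.symm
      rw [e1, mul_assoc, hVV', mul_one]
    rw [hstep1]
    rw [hPinvn, hPn, submatrix_mul_equiv Pinv (Dg g) ⇑c c ⇑c,
      submatrix_mul_equiv (Pinv * Dg g) P ⇑c c ⇑c]
    congr 1
    rw [hDfact g]
    simp only [mul_assoc]
    rw [hPP']
    simp only [mul_one]
    rw [← mul_assoc, hPP', one_mul]
  rw [hval]
  have hall : ∀ (pp qq : (i : Fin s) × (Fin (a i) × Fin (nn i))), D0 g pp qq ∈ K₀ := by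
    rintro ⟨i, j, x⟩ ⟨i', j', y⟩
    rw [hD0]
    beta_reduce
    by_cases hii : i = i'
    · subst hii
      rw [blockDiagonal'_apply_eq]
      unfold bb
      rw [submatrix_apply]
      rw [blockDiagonal_apply]
      split_ifs with hjj
      · exact hsub i ((ρ's i g : Matrix _ _ (Ki i)) x y).2
      · exact K₀.zero_mem
    · rw [blockDiagonal'_apply_ne _ _ _ hii]
      exact K₀.zero_mem
  exact hall (c p) (c q)

end MatrixLemmas

/-- Subadditivity of essential dimension: if `ρ` is `K`-equivalent to a direct sum
`a₁ρ₁ ⊕ ⋯ ⊕ a_sρ_s` and each `ρᵢ` descends to an intermediate field `Kᵢ` of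
transcendence degree `dᵢ` over `k`, then `ρ` descends to an intermediate field of
transcendence degree at most `d₁ + ⋯ + d_s` over `k`. -/
theorem ed_subadditive {k K : Type*} [Field k] [Field K] [Algebra k K]
    {G : Type*} [Group G] [Finite G]
    {n s : ℕ} (nn a : Fin s → ℕ) (ha : ∀ i, 1 ≤ a i)
    (ρ : G →* GL (Fin n) K)
    (ρs : (i : Fin s) → (G →* GL (Fin (nn i)) K))
    (e : (Fin n → K) ≃ₗ[K] (((i : Fin s) × (Fin (a i) × Fin (nn i))) → K))
    (he : ∀ (g : G) (v : Fin n → K) (i : Fin s) (j : Fin (a i)),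
      (fun x => e ((ρ g : Matrix (Fin n) (Fin n) K).mulVec v) ⟨i, j, x⟩)
        = (ρs i g : Matrix (Fin (nn i)) (Fin (nn i)) K).mulVec
            (fun y => e v ⟨i, j, y⟩))
    (Ki : (i : Fin s) → IntermediateField k K) (d : Fin s → ℕ)
    (hdesc : ∀ i, Descends (ρs i) (Ki i))
    (hd : ∀ i, TrdegEq (Ki i) (d i)) :
    ∃ K₀ : IntermediateField k K, Descends ρ K₀ ∧ TrdegLE K₀ (∑ i, d i) := by
  obtain ⟨K₀, hsub, htrdeg⟩ := compositum_exists Ki d hd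
  obtain ⟨M, hM⟩ := conj_entries_mem ρ ρs e he Ki hdesc K₀ hsub
  exact ⟨K₀, descends_of_entries_mem ρ K₀ M hM, htrdeg⟩
end
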